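/- For every integer k ≥ 1, the map F̃_k(ξ,η) = (1 - η/(kη + ξ), 1/(kη + ξ)) maps the triangle S̃ = {(ξ,η) : ξ ≤ 1, η ≤ 1, ξ + η ≥ 1} into the triangle V_k with vertices (1,1), ((k-1)/k, 1/k), and (k/(k+1), 1/(k+1)), and the triangles V_k, k ≥ 1, have pairwise disjoint interiors. -/

import Mathlib

open Set

noncomputable def Ftil (k : ℕ) (p : ℝ × ℝ) : ℝ × ℝ :=
  (1 - p.2 / (k * p.2 + p.1), 1 / (k * p.2 + p.1))

def Stil : Set (ℝ × ℝ) := {p | p.1 ≤ 1 ∧ p.2 ≤ 1 ∧ 1 ≤ p.1 + p.2}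

noncomputable def Vtri (k : ℕ) : Set (ℝ × ℝ) :=
  convexHull ℝ {((1 : ℝ), (1 : ℝ)), (((k : ℝ) - 1) / k, (1 : ℝ) / k),
    ((k : ℝ) / (k + 1), 1 / ((k : ℝ) + 1))}

/-- strictness in interior of a lower halfplane -/
lemma interior_hp_le {m c : ℝ} {p : ℝ × ℝ}
    (hp : p ∈ interior {q : ℝ × ℝ | q.2 - m * q.1 ≤ c}) : p.2 - m * p.1 < c := by
  obtain ⟨ε, hε, hball⟩ := Metric.isOpen_iff.1 isOpen_interior p hp
  have hq : (p.1, p.2 + ε / 2) ∈ Metric.ball p ε := by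
    simp [Prod.dist_eq, Real.dist_eq, abs_of_nonneg (le_of_lt (half_pos hε)), half_lt_self hε, hε, abs_of_pos hε]
  have := interior_subset (hball hq)
  simp only [mem_setOf_eq] at this
  linarith

lemma interior_hp_ge {m c : ℝ} {p : ℝ × ℝ}
    (hp : p ∈ interior {q : ℝ × ℝ | c ≤ q.2 - m * q.1}) : c < p.2 - m * p.1 := by
  obtain ⟨ε, hε, hball⟩ := Metric.isOpen_iff.1 isOpen_interior p hp
  have hq : (p.1, p.2 - ε / 2) ∈ Metric.ball p ε := by
    simp [Prod.dist_eq, Real.dist_eq, abs_of_nonneg (le_of_lt (half_pos hε)), half_lt_self hε, hε, abs_of_pos hε]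
  have := interior_subset (hball hq)
  simp only [mem_setOf_eq] at this
  linarith

lemma lin_map (m : ℝ) : IsLinearMap ℝ (fun q : ℝ × ℝ => q.2 - m * q.1) := by
  constructor
  · intro x y; simp [Prod.fst_add, Prod.snd_add]; ring
  · intro a x; simp [smul_eq_mul]; ring

lemma Vtri_subset_le (k : ℕ) (hk : 1 ≤ k) :
    Vtri k ⊆ {q : ℝ × ℝ | q.2 - ((k : ℝ) - 1) * q.1 ≤ 2 - k} := by
  have hk1 : (1:ℝ) ≤ k := by exact_mod_cast hk
  have hkpos : (0:ℝ) < k := by linarith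
  have hk1pos : (0:ℝ) < (k:ℝ) + 1 := by linarith
  apply convexHull_min _ (convex_halfSpace_le (lin_map _) _)
  rintro q (rfl | rfl | rfl) <;> simp only [mem_setOf_eq]
  · linarith
  · have e : 1/(k:ℝ) - ((k:ℝ)-1)*(((k:ℝ)-1)/k) = (1 - ((k:ℝ)-1)^2)/k := by
      field_simp
    rw [e, div_le_iff₀ hkpos]; nlinarith
  · have e : (1:ℝ) / ((k:ℝ) + 1) - ((k:ℝ) - 1) * ((k:ℝ) / (k + 1)) = (1 - ((k:ℝ)-1)*k) / ((k:ℝ)+1) := by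
      field_simp
    rw [e, div_le_iff₀ hk1pos]; nlinarith

lemma Vtri_subset_ge (k : ℕ) (hk : 1 ≤ k) :
    Vtri k ⊆ {q : ℝ × ℝ | 1 - (k : ℝ) ≤ q.2 - (k : ℝ) * q.1} := by
  have hk1 : (1:ℝ) ≤ k := by exact_mod_cast hk
  have hkpos : (0:ℝ) < k := by linarith
  have hk1pos : (0:ℝ) < (k:ℝ) + 1 := by linarith
  apply convexHull_min _ (convex_halfSpace_ge (lin_map _) _)
  rintro q (rfl | rfl | rfl) <;> simp only [mem_setOf_eq]
  · linarith
  · have : (1:ℝ) / k - (k:ℝ) * (((k:ℝ) - 1) / k) = (1 - (k:ℝ)*((k:ℝ)-1)) / k := by field_simp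
    rw [this, le_div_iff₀ hkpos]; nlinarith
  · have : (1:ℝ) / ((k:ℝ) + 1) - (k:ℝ) * ((k:ℝ) / (k + 1)) = (1 - (k:ℝ)*(k:ℝ)) / ((k:ℝ)+1) := by
      field_simp
    rw [this, le_div_iff₀ hk1pos]; nlinarith

theorem Ftil_maps_into_Vk_and_disjoint :
    (∀ k : ℕ, 1 ≤ k → ∀ p ∈ Stil, Ftil k p ∈ Vtri k) ∧
    (∀ k k' : ℕ, 1 ≤ k → 1 ≤ k' → k ≠ k' →
      interior (Vtri k) ∩ interior (Vtri k') = ∅) := by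
  constructor
  · rintro k hk ⟨ξ, η⟩ ⟨h1, h2, h3⟩
    simp only at h1 h2 h3
    have hk1 : (1:ℝ) ≤ k := by exact_mod_cast hk
    have hη0 : (0:ℝ) ≤ η := by linarith
    have hξ0 : (0:ℝ) ≤ ξ := by linarith
    have hkpos : (0:ℝ) < k := by linarith
    have hk1pos : (0:ℝ) < (k:ℝ) + 1 := by linarith
    set D : ℝ := (k : ℝ) * η + ξ with hD
    have hD1 : (1:ℝ) ≤ D := by nlinarith
    have hD0 : D ≠ 0 := by linarith
    set a : ℝ := (1 - η) / D with ha
    set b : ℝ := (k : ℝ) * (1 - ξ) / D with hb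
    set c : ℝ := ((k : ℝ) + 1) * (ξ + η - 1) / D with hc
    have ha0 : 0 ≤ a := div_nonneg (by linarith) (by linarith)
    have hb0 : 0 ≤ b := div_nonneg (by nlinarith) (by linarith)
    have hc0 : 0 ≤ c := div_nonneg (by nlinarith) (by linarith)
    have habc : a + b + c = 1 := by
      rw [ha, hb, hc, ← add_div, ← add_div, div_eq_one_iff_eq hD0]; ring
    have key : Ftil k (ξ, η) =
        a • ((1:ℝ), (1:ℝ)) + b • ((((k:ℝ) - 1) / k, (1:ℝ) / k)) +
          c • (((k:ℝ) / (k + 1), 1 / ((k:ℝ) + 1))) := by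
      simp only [Ftil, Prod.smul_mk, smul_eq_mul, Prod.mk_add_mk, Prod.mk.injEq]
      constructor
      · have hD0' : (k:ℝ) * η + ξ ≠ 0 := by rw [← hD]; exact hD0
        rw [ha, hb, hc, hD]; field_simp
        have hX : (η * k + ξ) * (η * k + ξ)⁻¹ = 1 := mul_inv_cancel₀ (by rw [mul_comm]; exact hD0')
        linear_combination (-1 : ℝ) * hX
      · have hD0' : (k:ℝ) * η + ξ ≠ 0 := by rw [← hD]; exact hD0
        rw [ha, hb, hc, hD]; field_simp; ring
    rw [key]
    have hA : ((1:ℝ), (1:ℝ)) ∈ Vtri k := subset_convexHull ℝ _ (by left; rfl)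
    have hB : ((((k:ℝ) - 1) / k, (1:ℝ) / k)) ∈ Vtri k :=
      subset_convexHull ℝ _ (by right; left; rfl)
    have hC : (((k:ℝ) / (k + 1), 1 / ((k:ℝ) + 1))) ∈ Vtri k :=
      subset_convexHull ℝ _ (by right; right; rfl)
    have hconv : Convex ℝ (Vtri k) := convex_convexHull ℝ _
    have := hconv.sum_mem (t := (Finset.univ : Finset (Fin 3)))
      (w := ![a, b, c]) (z := ![((1:ℝ), (1:ℝ)), (((k:ℝ) - 1) / k, (1:ℝ) / k),
        ((k:ℝ) / (k + 1), 1 / ((k:ℝ) + 1))])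
      (by intro i _; fin_cases i <;> simp [ha0, hb0, hc0])
      (by simp [Fin.sum_univ_three]; linarith)
      (by intro i _; fin_cases i
          · exact hA
          · simpa using hB
          · simpa using hC)
    simpa [Fin.sum_univ_three] using this
  · intro k k' hk hk' hne
    ext p
    simp only [mem_inter_iff, mem_empty_iff_false, iff_false]
    rintro ⟨hpk, hpk'⟩
    wlog hlt : k < k' generalizing k k'
    · exact this k' k hk' hk hne.symm hpk' hpk (by omega)
    have h1 : 1 - (k : ℝ) < p.2 - (k : ℝ) * p.1 :=
      interior_hp_ge (interior_mono (Vtri_subset_ge k hk) hpk)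
    have h2 : p.2 - ((k':ℝ) - 1) * p.1 < 2 - k' :=
      interior_hp_le (interior_mono (Vtri_subset_le k' hk') hpk')
    have h3 : p.2 - ((k:ℝ) - 1) * p.1 < 2 - k :=
      interior_hp_le (interior_mono (Vtri_subset_le k hk) hpk)
    have h4 : 1 - (k' : ℝ) < p.2 - (k' : ℝ) * p.1 :=
      interior_hp_ge (interior_mono (Vtri_subset_ge k' hk') hpk')
    have hkk : (k : ℝ) + 1 ≤ k' := by exact_mod_cast hlt
    rcases le_or_gt p.1 1 with h | h
    · nlinarith
    · nlinarith
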